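/- Let p, q be integers with 2 ≤ p < q and let γ be a real number with 0 < γ < γ_{p,q}. Then the function g(u) = 1 − u^{p−1} + γ u^{q−1} has exactly two roots in (0, ∞); denoting them a and A with a < A, one has g(u) > 0 for u ∈ (0,a) ∪ (A,∞) and g(u) < 0 for u ∈ (a,A). -/

import Mathlib

/-- The critical parameter `γ_{p,q} = ((p−1)/(q−1))·((q−p)/(q−1))^{(q−p)/(p−1)}`. -/
noncomputable def gammaCrit (p q : ℕ) : ℝ :=
  (((p : ℝ) - 1) / ((q : ℝ) - 1)) *
    (((q : ℝ) - (p : ℝ)) / ((q : ℝ) - 1)) ^ (((q : ℝ) - (p : ℝ)) / ((p : ℝ) - 1))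

lemma two_roots_aux (m n : ℕ) (hm : 1 ≤ m) (hmn : m < n) (γ : ℝ) (hγ0 : 0 < γ)
    (hγ : γ < ((m : ℝ) / n) * (((n : ℝ) - m) / n) ^ (((n : ℝ) - m) / m)) :
    ∃ a A : ℝ, 0 < a ∧ a < A ∧
      (1 - a ^ m + γ * a ^ n = 0) ∧
      (1 - A ^ m + γ * A ^ n = 0) ∧
      (∀ u : ℝ, 0 < u → 1 - u ^ m + γ * u ^ n = 0 → u = a ∨ u = A) ∧
      (∀ u : ℝ, ((0 < u ∧ u < a) ∨ A < u) → 0 < 1 - u ^ m + γ * u ^ n) ∧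
      (∀ u : ℝ, a < u → u < A → 1 - u ^ m + γ * u ^ n < 0) := by
  set g : ℝ → ℝ := fun u => 1 - u ^ m + γ * u ^ n with hg
  have hM : (1 : ℝ) ≤ (m : ℝ) := by exact_mod_cast hm
  have hM0 : (0 : ℝ) < (m : ℝ) := by linarith
  have hN : (m : ℝ) < (n : ℝ) := by exact_mod_cast hmn
  have hN0 : (0 : ℝ) < (n : ℝ) := by linarith
  have hNM : (0 : ℝ) < (n : ℝ) - m := by linarith
  have hcastNM : ((n - m : ℕ) : ℝ) = (n : ℝ) - m := by
    exact_mod_cast Nat.cast_sub hmn.le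
  -- the critical point
  set c : ℝ := (m : ℝ) / (γ * n) with hc
  have hc0 : 0 < c := by positivity
  set u₀ : ℝ := c ^ ((1 : ℝ) / ((n : ℝ) - m)) with hu₀
  have hu₀0 : 0 < u₀ := Real.rpow_pos_of_pos hc0 _
  have hu₀nm : u₀ ^ (n - m) = c := by
    rw [hu₀, ← Real.rpow_natCast (c ^ ((1:ℝ)/((n:ℝ)-m))) (n - m),
      ← Real.rpow_mul hc0.le, hcastNM]
    rw [one_div, inv_mul_cancel₀ hNM.ne', Real.rpow_one]
  have hu₀m : u₀ ^ m = c ^ ((m : ℝ) / ((n : ℝ) - m)) := by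
    rw [hu₀, ← Real.rpow_natCast (c ^ ((1:ℝ)/((n:ℝ)-m))) m, ← Real.rpow_mul hc0.le]
    ring_nf
  have hγc : γ * c = (m : ℝ) / n := by
    rw [hc]; field_simp
  -- derivative
  have hderiv : ∀ u : ℝ, HasDerivAt g (γ * (n * u ^ (n - 1)) - m * u ^ (m - 1)) u := by
    intro u
    have h1 := hasDerivAt_pow m u
    have h2 := hasDerivAt_pow n u
    have := ((hasDerivAt_const u (1 : ℝ)).sub h1).add (h2.const_mul γ)
    exact this.congr_deriv (by ring)
  have hcont : Continuous g := by
    apply Continuous.add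
    · exact (continuous_const.sub (continuous_pow m))
    · exact continuous_const.mul (continuous_pow n)
  -- sign of derivative
  have hderiv_neg : ∀ u ∈ Set.Ioo (0:ℝ) u₀, γ * (n * u ^ (n - 1)) - m * u ^ (m - 1) < 0 := by
    intro u hu
    obtain ⟨hu0, huu⟩ := hu
    have hsplit : u ^ (n - 1) = u ^ (m - 1) * u ^ (n - m) := by
      rw [← pow_add]; congr 1; omega
    have hlt : u ^ (n - m) < c := by
      rw [← hu₀nm]
      exact pow_lt_pow_left₀ huu hu0.le (by omega)
    have hpos : 0 < γ * (n : ℝ) * u ^ (m - 1) := by positivity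
    have hcc : γ * (n : ℝ) * u ^ (m - 1) * c = (m : ℝ) * u ^ (m - 1) := by
      rw [hc]; field_simp
    have key : γ * ((n : ℝ) * u ^ (n - 1)) < (m : ℝ) * u ^ (m - 1) := by
      calc γ * ((n : ℝ) * u ^ (n - 1)) = γ * (n : ℝ) * u ^ (m - 1) * u ^ (n - m) := by
              rw [hsplit]; ring
        _ < γ * (n : ℝ) * u ^ (m - 1) * c := (mul_lt_mul_iff_right₀ hpos).mpr hlt
        _ = (m : ℝ) * u ^ (m - 1) := hcc
    linarith
  have hderiv_pos : ∀ u ∈ Set.Ioi u₀, 0 < γ * (n * u ^ (n - 1)) - m * u ^ (m - 1) := by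
    intro u hu
    have hu0 : 0 < u := hu₀0.trans hu
    have hsplit : u ^ (n - 1) = u ^ (m - 1) * u ^ (n - m) := by
      rw [← pow_add]; congr 1; omega
    have hlt : c < u ^ (n - m) := by
      rw [← hu₀nm]
      exact pow_lt_pow_left₀ hu hu₀0.le (by omega)
    have hpos : 0 < γ * (n : ℝ) * u ^ (m - 1) := by positivity
    have hcc : γ * (n : ℝ) * u ^ (m - 1) * c = (m : ℝ) * u ^ (m - 1) := by
      rw [hc]; field_simp
    have key : (m : ℝ) * u ^ (m - 1) < γ * ((n : ℝ) * u ^ (n - 1)) := by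
      calc (m : ℝ) * u ^ (m - 1) = γ * (n : ℝ) * u ^ (m - 1) * c := hcc.symm
        _ < γ * (n : ℝ) * u ^ (m - 1) * u ^ (n - m) := (mul_lt_mul_iff_right₀ hpos).mpr hlt
        _ = γ * ((n : ℝ) * u ^ (n - 1)) := by rw [hsplit]; ring
    linarith
  -- monotonicity
  have hanti : StrictAntiOn g (Set.Icc 0 u₀) := by
    apply strictAntiOn_of_deriv_neg (convex_Icc 0 u₀) hcont.continuousOn
    intro u hu
    rw [interior_Icc] at hu
    rw [(hderiv u).deriv]
    exact hderiv_neg u hu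
  have hmono : StrictMonoOn g (Set.Ici u₀) := by
    apply strictMonoOn_of_deriv_pos (convex_Ici u₀) hcont.continuousOn
    intro u hu
    rw [interior_Ici] at hu
    rw [(hderiv u).deriv]
    exact hderiv_pos u hu
  -- g u₀ < 0
  have hdiv1 : (0:ℝ) < ((n : ℝ) - m) / n := div_pos hNM hN0
  have hdiv2 : (0:ℝ) < (n : ℝ) / ((n : ℝ) - m) := div_pos hN0 hNM
  have hdiv3 : (0:ℝ) < (m : ℝ) / ((n : ℝ) - m) := div_pos hM0 hNM
  have hBpos : (0:ℝ) < (((n : ℝ) - m) / n) ^ (((n : ℝ) - m) / m) :=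
    Real.rpow_pos_of_pos hdiv1 _
  have hKc : ((n : ℝ) / ((n : ℝ) - m)) ^ (((n : ℝ) - m) / m) < c := by
    have h1 : c = ((m : ℝ) / n) / γ := by rw [hc, div_div, mul_comm γ (n : ℝ)]
    have h2 : ((m : ℝ) / n) / (((m : ℝ) / n) * (((n : ℝ) - m) / n) ^ (((n : ℝ) - m) / m)) < c := by
      rw [h1]
      exact div_lt_div_of_pos_left (by positivity) hγ0 hγ
    have key : ((m : ℝ) / n) / (((m : ℝ) / n) * (((n : ℝ) - m) / n) ^ (((n : ℝ) - m) / m))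
        = ((((n : ℝ) - m) / n) ^ (((n : ℝ) - m) / m))⁻¹ :=
      div_mul_cancel_left₀ (div_pos hM0 hN0).ne' _
    rw [key] at h2
    have hKB : ((n : ℝ) / ((n : ℝ) - m)) ^ (((n : ℝ) - m) / m)
        = ((((n : ℝ) - m) / n) ^ (((n : ℝ) - m) / m))⁻¹ := by
      rw [← Real.inv_rpow hdiv1.le, inv_div]
    rw [hKB]
    exact h2
  have hu₀m_gt : (n : ℝ) / ((n : ℝ) - m) < u₀ ^ m := by
    have hK1 : (((n : ℝ) / ((n : ℝ) - m)) ^ (((n : ℝ) - m) / m)) ^ ((m : ℝ) / ((n : ℝ) - m))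
        = (n : ℝ) / ((n : ℝ) - m) := by
      rw [← Real.rpow_mul hdiv2.le,
        show (((n : ℝ) - m) / m) * ((m : ℝ) / ((n : ℝ) - m)) = 1 by
          rw [div_mul_div_comm, mul_comm ((n : ℝ) - m) (m : ℝ)]
          exact div_self (mul_pos hM0 hNM).ne',
        Real.rpow_one]
    rw [hu₀m, ← hK1]
    exact Real.rpow_lt_rpow (Real.rpow_pos_of_pos hdiv2 _).le hKc hdiv3
  have hgu₀ : g u₀ < 0 := by
    have hsplit : u₀ ^ n = u₀ ^ m * u₀ ^ (n - m) := by
      rw [← pow_add]; congr 1; omega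
    have e : g u₀ = 1 - u₀ ^ m * (((n : ℝ) - m) / n) := by
      simp only [hg]
      rw [hsplit, hu₀nm,
        show γ * (u₀ ^ m * c) = u₀ ^ m * (γ * c) by ring, hγc]
      field_simp
      ring
    rw [e]
    have h2 : ((n : ℝ) / ((n : ℝ) - m)) * (((n : ℝ) - m) / n) = 1 := by
      rw [div_mul_div_comm, mul_comm (n : ℝ) ((n : ℝ) - m)]
      exact div_self (mul_pos hNM hN0).ne'
    nlinarith [hdiv1, hu₀m_gt]
  -- root a via IVT
  have hg0 : g 0 = 1 := by
    simp [hg, zero_pow (by omega : m ≠ 0), zero_pow (by omega : n ≠ 0)]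
  obtain ⟨a, ha_mem, hga⟩ : ∃ a ∈ Set.Ioo (0:ℝ) u₀, g a = 0 := by
    have := intermediate_value_Ioo' (le_of_lt hu₀0) hcont.continuousOn
      (show (0:ℝ) ∈ Set.Ioo (g u₀) (g 0) by rw [hg0]; exact ⟨hgu₀, one_pos⟩)
    obtain ⟨a, ha, hga⟩ := this
    exact ⟨a, ha, hga⟩
  -- large point X with g X > 0
  obtain ⟨A, hA_mem, hgA⟩ : ∃ A ∈ Set.Ioi u₀, g A = 0 := by
    set y : ℝ := (1 / γ) ^ ((1 : ℝ) / ((n : ℝ) - m)) with hy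
    have hy0 : 0 ≤ y := (Real.rpow_pos_of_pos (by positivity) _).le
    set X : ℝ := max u₀ y + 1 with hX
    have hXu : u₀ < X := by
      have := le_max_left u₀ y; rw [hX]; linarith
    have hXy : y < X := by
      have := le_max_right u₀ y; rw [hX]; linarith
    have hX0 : 0 < X := hu₀0.trans hXu
    have hynm : y ^ (n - m) = 1 / γ := by
      rw [hy, ← Real.rpow_natCast ((1/γ) ^ ((1:ℝ)/((n:ℝ)-m))) (n - m),
        ← Real.rpow_mul (by positivity), hcastNM, one_div ((n:ℝ)-m),
        inv_mul_cancel₀ hNM.ne', Real.rpow_one]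
    have hXnm : 1 / γ < X ^ (n - m) := by
      rw [← hynm]
      exact pow_lt_pow_left₀ hXy hy0 (by omega)
    have hgX : 0 < g X := by
      have hsplit : X ^ n = X ^ m * X ^ (n - m) := by
        rw [← pow_add]; congr 1; omega
      have h1 : 1 < X ^ (n - m) * γ := (div_lt_iff₀ hγ0).mp hXnm
      have h1' : 1 < γ * X ^ (n - m) := by rw [mul_comm]; exact h1
      have h2 : (0:ℝ) < X ^ m := by positivity
      have hkey : X ^ m < γ * X ^ n := by
        calc X ^ m = X ^ m * 1 := (mul_one _).symm
          _ < X ^ m * (γ * X ^ (n - m)) := (mul_lt_mul_iff_right₀ h2).mpr h1'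
          _ = γ * X ^ n := by rw [hsplit]; ring
      simp only [hg]; linarith
    have := intermediate_value_Ioo (le_of_lt hXu) hcont.continuousOn
      (show (0:ℝ) ∈ Set.Ioo (g u₀) (g X) from ⟨hgu₀, hgX⟩)
    obtain ⟨A, hA, hgA⟩ := this
    exact ⟨A, hA.1, hgA⟩
  obtain ⟨ha0, hau⟩ := ha_mem
  have huA : u₀ < A := hA_mem
  have haA : a < A := hau.trans huA
  -- sign lemmas
  have hpos : ∀ u : ℝ, ((0 < u ∧ u < a) ∨ A < u) → 0 < g u := by
    rintro u (⟨hu0, hua⟩ | hAu)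
    · have := hanti (Set.mem_Icc.mpr ⟨hu0.le, (hua.trans hau).le⟩)
        (Set.mem_Icc.mpr ⟨ha0.le, hau.le⟩) hua
      rw [hga] at this; exact this
    · have := hmono (Set.mem_Ici.mpr huA.le) (Set.mem_Ici.mpr (huA.trans hAu).le) hAu
      rw [hgA] at this; exact this
  have hneg : ∀ u : ℝ, a < u → u < A → g u < 0 := by
    intro u hau' huA'
    rcases le_or_gt u u₀ with h | h
    · have := hanti (Set.mem_Icc.mpr ⟨ha0.le, hau.le⟩)
        (Set.mem_Icc.mpr ⟨(ha0.trans hau').le, h⟩) hau'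
      rw [hga] at this; exact this
    · have := hmono (Set.mem_Ici.mpr h.le) (Set.mem_Ici.mpr huA.le) huA'
      rw [hgA] at this; exact this
  refine ⟨a, A, ha0, haA, hga, hgA, ?_, hpos, hneg⟩
  intro u hu0 hgu
  rcases lt_trichotomy u a with h | h | h
  · exact absurd hgu (by have := hpos u (Or.inl ⟨hu0, h⟩); simp only [hg] at this; linarith)
  · exact Or.inl h
  rcases lt_trichotomy u A with h' | h' | h'
  · exact absurd hgu (by have := hneg u h h'; simp only [hg] at this; linarith)
  · exact Or.inr h'
  · exact absurd hgu (by have := hpos u (Or.inr h'); simp only [hg] at this; linarith)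

/-- For `2 ≤ p < q` and `0 < γ < γ_{p,q}`, the function
`g(u) = 1 − u^{p−1} + γ u^{q−1}` has exactly two roots `a < A` in `(0,∞)`, and
`g > 0` on `(0,a) ∪ (A,∞)` while `g < 0` on `(a,A)`. -/
theorem two_roots_of_gamma_lt_crit (p q : ℕ) (hp : 2 ≤ p) (hpq : p < q)
    (γ : ℝ) (hγ0 : 0 < γ) (hγ : γ < gammaCrit p q) :
    ∃ a A : ℝ, 0 < a ∧ a < A ∧
      (1 - a ^ (p - 1) + γ * a ^ (q - 1) = 0) ∧
      (1 - A ^ (p - 1) + γ * A ^ (q - 1) = 0) ∧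
      (∀ u : ℝ, 0 < u → 1 - u ^ (p - 1) + γ * u ^ (q - 1) = 0 → u = a ∨ u = A) ∧
      (∀ u : ℝ, ((0 < u ∧ u < a) ∨ A < u) → 0 < 1 - u ^ (p - 1) + γ * u ^ (q - 1)) ∧
      (∀ u : ℝ, a < u → u < A → 1 - u ^ (p - 1) + γ * u ^ (q - 1) < 0) := by
  have e1 : ((p - 1 : ℕ) : ℝ) = (p : ℝ) - 1 := by
    exact_mod_cast Nat.cast_sub (by omega : 1 ≤ p)
  have e2 : ((q - 1 : ℕ) : ℝ) = (q : ℝ) - 1 := by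
    exact_mod_cast Nat.cast_sub (by omega : 1 ≤ q)
  have e3 : ((q : ℝ) - 1) - ((p : ℝ) - 1) = (q : ℝ) - p := by ring
  exact two_roots_aux (p - 1) (q - 1) (by omega) (by omega) γ hγ0
    (by rw [e1, e2, e3]; exact hγ)
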